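/- If a Boolean function f on n inputs contains at least one monomial of degree ≥ 2 in its algebraic normal form (i.e., f is not affine), then the full-correlation box P_f is non-local. -/

import Mathlib

open Finset

noncomputable section

/-- An `n`-partite box: conditional distribution `P x a` of outputs `a` given inputs `x`,
with binary inputs/outputs modeled as `ZMod 2`. -/
abbrev Box (n : ℕ) := (Fin n → ZMod 2) → (Fin n → ZMod 2) → ℝ

/-- Non-signaling: for every subset `S` of parties, the marginal of the outputs in `S`
depends only on the inputs in `S`. -/
def IsNonSignaling {n : ℕ} (P : Box n) : Prop :=
  ∀ (S : Finset (Fin n)) (x x' : Fin n → ZMod 2), (∀ i ∈ S, x i = x' i) →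
    ∀ aS : Fin n → ZMod 2,
      ∑ a ∈ Finset.univ.filter (fun a : Fin n → ZMod 2 => ∀ i ∈ S, a i = aS i), P x a =
      ∑ a ∈ Finset.univ.filter (fun a : Fin n → ZMod 2 => ∀ i ∈ S, a i = aS i), P x' a

/-- A non-signaling box: nonnegative, normalized, non-signaling. -/
def IsNSBox {n : ℕ} (P : Box n) : Prop :=
  (∀ x a, 0 ≤ P x a) ∧ (∀ x, ∑ a, P x a = 1) ∧ IsNonSignaling P

/-- The full-correlation box associated to the Boolean function `f`. -/
def FCB (n : ℕ) (f : (Fin n → ZMod 2) → ZMod 2) : Box n :=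
  fun x a => if (∑ i, a i) = f x then ((2:ℝ)^(n-1))⁻¹ else 0

/-- The `n`-partite Popescu–Rohrlich box. -/
def nPR (n : ℕ) : Box n := FCB n (fun x => ∏ i, x i)

/-- The local box with uniformly correlated outputs of even parity. -/
def Pc (n : ℕ) : Box n := FCB n (fun _ => 0)

/-- Extremality in the non-signaling polytope. -/
def IsExtremalNS {n : ℕ} (P : Box n) : Prop :=
  IsNSBox P ∧ ∀ (ε : ℝ) (P1 P2 : Box n), 0 < ε → ε < 1 → IsNSBox P1 → IsNSBox P2 →
    (∀ x a, P x a = ε * P1 x a + (1 - ε) * P2 x a) → P1 = P ∧ P2 = P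

/-- Locality: convex combination of products of single-party conditional distributions. -/
def IsLocal {n : ℕ} (P : Box n) : Prop :=
  ∃ (m : ℕ) (q : Fin m → ℝ) (s : Fin m → Fin n → ZMod 2 → ZMod 2 → ℝ),
    (∀ r, 0 ≤ q r) ∧ (∑ r, q r = 1) ∧
    (∀ r i xi ai, 0 ≤ s r i xi ai) ∧ (∀ r i xi, ∑ ai : ZMod 2, s r i xi ai = 1) ∧
    ∀ x a, P x a = ∑ r, q r * ∏ i, s r i (x i) (a i)

/-- `f` is affine: a constant XORed with a subset of the input bits. -/
def IsAffine {n : ℕ} (f : (Fin n → ZMod 2) → ZMod 2) : Prop :=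
  ∃ (c : ZMod 2) (S : Finset (Fin n)), ∀ x, f x = c + ∑ i ∈ S, x i

/-- L¹ distance between boxes. -/
def L1dist {n : ℕ} (P Q : Box n) : ℝ := ∑ x, ∑ a, |P x a - Q x a|

namespace FCBaux

noncomputable def χ : ZMod 2 → ℝ := fun b => if b = 0 then 1 else -1

lemma zmod2_cases (b : ZMod 2) : b = 0 ∨ b = 1 := by
  fin_cases b <;> simp <;> first | exact Or.inl rfl | exact Or.inr rfl

lemma chi_zero : χ 0 = 1 := rfl
lemma chi_one : χ 1 = -1 := rfl

lemma chi_add (b c : ZMod 2) : χ (b + c) = χ b * χ c := by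
  rcases zmod2_cases b with hb | hb <;> rcases zmod2_cases c with hc | hc <;>
    subst hb <;> subst hc <;> norm_num [χ] <;> first | rfl | decide | norm_num [show ((2:ZMod 2)) = 0 from by decide]

lemma chi_sq (b : ZMod 2) : χ b * χ b = 1 := by
  rcases zmod2_cases b with hb | hb <;> subst hb <;> norm_num [χ]

lemma chi_pm (b : ZMod 2) : χ b = 1 ∨ χ b = -1 := by
  rcases zmod2_cases b with hb | hb <;> subst hb <;> simp [χ]

lemma chi_sum {ι : Type*} (s : Finset ι) (a : ι → ZMod 2) :
    ∏ i ∈ s, χ (a i) = χ (∑ i ∈ s, a i) := by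
  induction s using Finset.cons_induction with
  | empty => simp [chi_zero]
  | cons i s hi ih => rw [Finset.prod_cons, Finset.sum_cons, chi_add, ih]

lemma sum_zmod2 (g : ZMod 2 → ℝ) : ∑ b, g b = g 0 + g 1 := by
  rw [show (univ : Finset (ZMod 2)) = {0,1} by decide]; simp

lemma habs (u v : ℝ) (hu : |u| ≤ 1) (hv : |v| ≤ 1) : |u + v| + |u - v| ≤ 2 := by
  rcases abs_cases (u + v) with ⟨h1, _⟩ | ⟨h1, _⟩ <;>
    rcases abs_cases (u - v) with ⟨h2, _⟩ | ⟨h2, _⟩ <;>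
    rcases abs_le.mp hu with ⟨hu1, hu2⟩ <;> rcases abs_le.mp hv with ⟨hv1, hv2⟩ <;>
    linarith

lemma key_step (a0 a1 g X Y : ℝ) (ha0 : |a0| ≤ 1) (ha1 : |a1| ≤ 1) (hg : |g| ≤ 1) :
    a0 * X * g + a1 * Y * g ≤ |X| + |Y| := by
  have h1 : a0 * X * g ≤ |X| := by
    calc a0 * X * g ≤ |a0 * X * g| := le_abs_self _
    _ = |a0| * |X| * |g| := by rw [abs_mul, abs_mul]
    _ ≤ 1 * |X| * 1 := by
        apply mul_le_mul (mul_le_mul ha0 le_rfl (abs_nonneg _) zero_le_one) hg (abs_nonneg _)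
        positivity
    _ = |X| := by ring
  have h2 : a1 * Y * g ≤ |Y| := by
    calc a1 * Y * g ≤ |a1 * Y * g| := le_abs_self _
    _ = |a1| * |Y| * |g| := by rw [abs_mul, abs_mul]
    _ ≤ 1 * |Y| * 1 := by
        apply mul_le_mul (mul_le_mul ha1 le_rfl (abs_nonneg _) zero_le_one) hg (abs_nonneg _)
        positivity
    _ = |Y| := by ring
  linarith

lemma chsh_bound (e00 e01 e10 e11 a0 a1 b0 b1 g : ℝ)
    (h00 : e00 = 1 ∨ e00 = -1) (h01 : e01 = 1 ∨ e01 = -1)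
    (h10 : e10 = 1 ∨ e10 = -1) (h11 : e11 = 1 ∨ e11 = -1)
    (hp : e00 * e01 * e10 * e11 = -1)
    (ha0 : |a0| ≤ 1) (ha1 : |a1| ≤ 1) (hb0 : |b0| ≤ 1) (hb1 : |b1| ≤ 1) (hg : |g| ≤ 1) :
    e00 * (a0 * b0 * g) + e01 * (a0 * b1 * g) + e10 * (a1 * b0 * g) + e11 * (a1 * b1 * g) ≤ 2 := by
  have key : a0 * (e00 * b0 + e01 * b1) * g + a1 * (e10 * b0 + e11 * b1) * g
      ≤ |e00 * b0 + e01 * b1| + |e10 * b0 + e11 * b1| :=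
    key_step a0 a1 g _ _ ha0 ha1 hg
  have heq : e00 * (a0 * b0 * g) + e01 * (a0 * b1 * g) + e10 * (a1 * b0 * g) + e11 * (a1 * b1 * g)
      = a0 * (e00 * b0 + e01 * b1) * g + a1 * (e10 * b0 + e11 * b1) * g := by ring
  rw [heq]
  refine le_trans key ?_
  have H := habs b0 b1 hb0 hb1
  have e1 : |b0 + -b1| = |b0 - b1| := by rw [sub_eq_add_neg]
  have e2 : |-b0 + -b1| = |b0 + b1| := by rw [show -b0 + -b1 = -(b0 + b1) by ring, abs_neg]
  have e3 : |-b0 + b1| = |b0 - b1| := by rw [show -b0 + b1 = -(b0 - b1) by ring, abs_neg]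
  rcases h00 with h | h <;> subst h <;> rcases h01 with h | h <;> subst h <;>
    rcases h10 with h | h <;> subst h <;> rcases h11 with h | h <;> subst h <;>
    (try norm_num at hp ⊢) <;>
    first
      | linarith
      | (simp only [e1, e2, e3]; linarith)

end FCBaux


open FCBaux

/-- if the ANF of `f` contains a monomial of degree ≥ 2, then `FCB f`
is non-local. -/
theorem fcb_nonlocal_of_degree_two_monomial (n : ℕ)
    (f : (Fin n → ZMod 2) → ZMod 2) (a : Finset (Fin n) → ZMod 2)
    (ha : ∀ x, f x = ∑ I : Finset (Fin n), a I * ∏ i ∈ I, x i)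
    (I : Finset (Fin n)) (hI : 2 ≤ I.card) (haI : a I = 1) :
    ¬ IsLocal (FCB n f) := by
  classical
  rintro ⟨m, q, s, hq0, hq1, hs0, hs1, hP⟩
  obtain ⟨i, hiI⟩ : I.Nonempty := Finset.card_pos.mp (by omega)
  obtain ⟨j, hjI, hij⟩ := Finset.exists_mem_ne (s := I) (by omega) i
  have habb : ∀ d : ZMod 2, d + d = 0 := by decide
  set 𝒥 : Finset (Finset (Fin n)) :=
    Finset.univ.filter (fun J => i ∈ J ∧ j ∈ J ∧ a J = 1) with h𝒥
  obtain ⟨J0, hJ0mem, hmin⟩ := Finset.exists_min_image 𝒥 Finset.card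
    ⟨I, by simp [h𝒥, hiI, hjI, haI]⟩
  rw [h𝒥, Finset.mem_filter] at hJ0mem
  obtain ⟨-, hiJ0, hjJ0, haJ0⟩ := hJ0mem
  set z : Fin n → ZMod 2 := fun k => if k ∈ J0 then 1 else 0 with hz
  set X : ZMod 2 → ZMod 2 → (Fin n → ZMod 2) :=
    fun u v k => if k = i then u else if k = j then v else z k with hX
  have hXi : ∀ u v, X u v i = u := fun u v => by simp [hX]
  have hXj : ∀ u v, X u v j = v := fun u v => by simp [hX, hij]
  have hXk : ∀ u v k, k ≠ i → k ≠ j → X u v k = z k := by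
    intro u v k h1 h2; simp [hX, h1, h2]
  -- key combinatorial identity
  have hsplit : ∀ (J : Finset (Fin n)), i ∈ J → j ∈ J → ∀ u v : ZMod 2,
      ∏ k ∈ J, X u v k = u * (v * ∏ k ∈ (J.erase i).erase j, z k) := by
    intro J hiJ hjJ u v
    rw [← Finset.mul_prod_erase J _ hiJ, hXi]
    congr 1
    rw [← Finset.mul_prod_erase _ _ (Finset.mem_erase.mpr ⟨hij, hjJ⟩), hXj]
    congr 1
    refine Finset.prod_congr rfl ?_
    intro k hk
    simp only [Finset.mem_erase] at hk
    exact hXk u v k hk.2.1 hk.1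
  have hkey : f (X 0 0) + f (X 0 1) + f (X 1 0) + f (X 1 1) = 1 := by
    rw [ha (X 0 0), ha (X 0 1), ha (X 1 0), ha (X 1 1),
      ← Finset.sum_add_distrib, ← Finset.sum_add_distrib, ← Finset.sum_add_distrib]
    rw [Finset.sum_eq_single J0]
    · rw [hsplit J0 hiJ0 hjJ0, hsplit J0 hiJ0 hjJ0, hsplit J0 hiJ0 hjJ0,
        hsplit J0 hiJ0 hjJ0, haJ0]
      have hC : ∏ k ∈ (J0.erase i).erase j, z k = 1 := by
        refine Finset.prod_eq_one ?_
        intro k hk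
        simp only [Finset.mem_erase] at hk
        simp [hz, hk.2.2]
      rw [hC]; ring
    · intro J _ hJne
      by_cases hiJ : i ∈ J
      · by_cases hjJ : j ∈ J
        · rw [hsplit J hiJ hjJ, hsplit J hiJ hjJ, hsplit J hiJ hjJ, hsplit J hiJ hjJ]
          rcases zmod2_cases (a J) with h0 | h1
          · rw [h0]; ring
          · have hJmem : J ∈ 𝒥 := by simp [h𝒥, hiJ, hjJ, h1]
            have hcard := hmin J hJmem
            have hnsub : ¬ J ⊆ J0 := fun hsub =>
              hJne (Finset.eq_of_subset_of_card_le hsub hcard)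
            obtain ⟨k, hkJ, hkJ0⟩ := Finset.not_subset.mp hnsub
            have hC : ∏ k ∈ (J.erase i).erase j, z k = 0 := by
              refine Finset.prod_eq_zero (i := k)
                (Finset.mem_erase.mpr ⟨fun h => hkJ0 (h ▸ hjJ0),
                  Finset.mem_erase.mpr ⟨fun h => hkJ0 (h ▸ hiJ0), hkJ⟩⟩) ?_
              simp [hz, hkJ0]
            rw [hC]; ring
        · have hsp : ∀ u v : ZMod 2, ∏ k ∈ J, X u v k = u * ∏ k ∈ J.erase i, z k := by
            intro u v
            rw [← Finset.mul_prod_erase J _ hiJ, hXi]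
            congr 1
            refine Finset.prod_congr rfl ?_
            intro k hk
            rcases Finset.mem_erase.mp hk with ⟨hki, hkJ⟩
            exact hXk u v k hki (fun h => hjJ (h ▸ hkJ))
          rw [hsp, hsp, hsp, hsp]
          linear_combination habb (a J * ∏ k ∈ J.erase i, z k)
      · by_cases hjJ : j ∈ J
        · have hsp : ∀ u v : ZMod 2, ∏ k ∈ J, X u v k = v * ∏ k ∈ J.erase j, z k := by
            intro u v
            rw [← Finset.mul_prod_erase J _ hjJ, hXj]
            congr 1
            refine Finset.prod_congr rfl ?_
            intro k hk
            rcases Finset.mem_erase.mp hk with ⟨hkj, hkJ⟩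
            exact hXk u v k (fun h => hiJ (h ▸ hkJ)) hkj
          rw [hsp, hsp, hsp, hsp]
          linear_combination habb (a J * ∏ k ∈ J.erase j, z k)
        · have hsp : ∀ u v : ZMod 2, ∏ k ∈ J, X u v k = ∏ k ∈ J, z k := by
            intro u v
            refine Finset.prod_congr rfl ?_
            intro k hk
            exact hXk u v k (fun h => hiJ (h ▸ hk)) (fun h => hjJ (h ▸ hk))
          rw [hsp, hsp, hsp, hsp]
          linear_combination habb (a J * ∏ k ∈ J, z k) + habb (a J * ∏ k ∈ J, z k)
    · intro h; exact absurd (Finset.mem_univ J0) h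
  -- analytic part
  have sum_pi_prod : ∀ (g : Fin n → ZMod 2 → ℝ),
      ∑ aa : Fin n → ZMod 2, ∏ k, g k (aa k) = ∏ k, ∑ b : ZMod 2, g k b := by
    intro g
    rw [← Fintype.piFinset_univ, Finset.prod_univ_sum]
  have hnorm : ∀ x, ∑ aa : Fin n → ZMod 2, FCB n f x aa = 1 := by
    intro x
    calc ∑ aa : Fin n → ZMod 2, FCB n f x aa
        = ∑ aa : Fin n → ZMod 2, ∑ r, q r * ∏ k, s r k (x k) (aa k) := by
          refine Finset.sum_congr rfl fun aa _ => hP x aa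
      _ = ∑ r, ∑ aa : Fin n → ZMod 2, q r * ∏ k, s r k (x k) (aa k) := Finset.sum_comm
      _ = ∑ r, q r * ∑ aa : Fin n → ZMod 2, ∏ k, s r k (x k) (aa k) := by
          refine Finset.sum_congr rfl fun r _ => (Finset.mul_sum _ _ _).symm
      _ = ∑ r, q r * 1 := by
          refine Finset.sum_congr rfl fun r _ => ?_
          rw [sum_pi_prod, Finset.prod_congr rfl fun k _ => hs1 r k (x k), Finset.prod_const_one]
      _ = 1 := by simp [hq1]
  have hE1 : ∀ x, ∑ aa : Fin n → ZMod 2, (∏ k, χ (aa k)) * FCB n f x aa = χ (f x) := by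
    intro x
    have hterm : ∀ aa : Fin n → ZMod 2,
        (∏ k, χ (aa k)) * FCB n f x aa = χ (f x) * FCB n f x aa := by
      intro aa
      by_cases h : (∑ k, aa k) = f x
      · rw [chi_sum, h]
      · simp [FCB, h]
    rw [Finset.sum_congr rfl fun aa _ => hterm aa, ← Finset.mul_sum, hnorm x, mul_one]
  have hE2 : ∀ x, ∑ aa : Fin n → ZMod 2, (∏ k, χ (aa k)) * FCB n f x aa
      = ∑ r, q r * ∏ k, (s r k (x k) 0 - s r k (x k) 1) := by
    intro x
    calc ∑ aa : Fin n → ZMod 2, (∏ k, χ (aa k)) * FCB n f x aa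
        = ∑ aa : Fin n → ZMod 2, ∑ r, q r * ∏ k, (χ (aa k) * s r k (x k) (aa k)) := by
          refine Finset.sum_congr rfl fun aa _ => ?_
          rw [hP x aa, Finset.mul_sum]
          refine Finset.sum_congr rfl fun r _ => ?_
          rw [Finset.prod_mul_distrib]; ring
      _ = ∑ r, ∑ aa : Fin n → ZMod 2, q r * ∏ k, (χ (aa k) * s r k (x k) (aa k)) :=
          Finset.sum_comm
      _ = ∑ r, q r * ∏ k, (s r k (x k) 0 - s r k (x k) 1) := by
          refine Finset.sum_congr rfl fun r _ => ?_
          rw [← Finset.mul_sum, sum_pi_prod (fun k b => χ b * s r k (x k) b)]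
          congr 1
          refine Finset.prod_congr rfl fun k _ => ?_
          rw [sum_zmod2 (fun b => χ b * s r k (x k) b), chi_zero, chi_one]
          ring
  have hEfin : ∀ x, χ (f x) = ∑ r, q r * ∏ k, (s r k (x k) 0 - s r k (x k) 1) := by
    intro x; rw [← hE1 x, hE2 x]
  have ht : ∀ r k w, |s r k w 0 - s r k w 1| ≤ 1 := by
    intro r k w
    have h0 := hs0 r k w 0
    have h1 := hs0 r k w 1
    have hsum := hs1 r k w
    rw [sum_zmod2 (fun b => s r k w b)] at hsum
    rw [abs_le]; constructor <;> linarith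
  -- splitting the product over parties
  have hsplitT : ∀ r (u v : ZMod 2),
      ∏ k, (s r k (X u v k) 0 - s r k (X u v k) 1)
        = (s r i u 0 - s r i u 1) * ((s r j v 0 - s r j v 1) *
            ∏ k ∈ (Finset.univ.erase i).erase j, (s r k (z k) 0 - s r k (z k) 1)) := by
    intro r u v
    rw [← Finset.mul_prod_erase Finset.univ _ (Finset.mem_univ i), hXi]
    congr 1
    rw [← Finset.mul_prod_erase _ _ (Finset.mem_erase.mpr ⟨hij, Finset.mem_univ j⟩), hXj]
    congr 1
    refine Finset.prod_congr rfl ?_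
    intro k hk
    simp only [Finset.mem_erase] at hk
    rw [hXk u v k hk.2.1 hk.1]
  have hεprod : χ (f (X 0 0)) * χ (f (X 0 1)) * χ (f (X 1 0)) * χ (f (X 1 1)) = -1 := by
    rw [← chi_add, ← chi_add, ← chi_add, hkey, chi_one]
  have hS1 : χ (f (X 0 0)) * χ (f (X 0 0)) + χ (f (X 0 1)) * χ (f (X 0 1))
      + χ (f (X 1 0)) * χ (f (X 1 0)) + χ (f (X 1 1)) * χ (f (X 1 1)) = 4 := by
    rw [chi_sq, chi_sq, chi_sq, chi_sq]; norm_num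
  have hS2 : χ (f (X 0 0)) * χ (f (X 0 0)) + χ (f (X 0 1)) * χ (f (X 0 1))
      + χ (f (X 1 0)) * χ (f (X 1 0)) + χ (f (X 1 1)) * χ (f (X 1 1))
      = ∑ r, q r * (χ (f (X 0 0)) * ((s r i 0 0 - s r i 0 1) * ((s r j 0 0 - s r j 0 1) *
            ∏ k ∈ (Finset.univ.erase i).erase j, (s r k (z k) 0 - s r k (z k) 1)))
          + χ (f (X 0 1)) * ((s r i 0 0 - s r i 0 1) * ((s r j 1 0 - s r j 1 1) *
            ∏ k ∈ (Finset.univ.erase i).erase j, (s r k (z k) 0 - s r k (z k) 1)))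
          + χ (f (X 1 0)) * ((s r i 1 0 - s r i 1 1) * ((s r j 0 0 - s r j 0 1) *
            ∏ k ∈ (Finset.univ.erase i).erase j, (s r k (z k) 0 - s r k (z k) 1)))
          + χ (f (X 1 1)) * ((s r i 1 0 - s r i 1 1) * ((s r j 1 0 - s r j 1 1) *
            ∏ k ∈ (Finset.univ.erase i).erase j, (s r k (z k) 0 - s r k (z k) 1)))) := by
    conv_lhs => rw [show χ (f (X 0 0)) * χ (f (X 0 0)) + χ (f (X 0 1)) * χ (f (X 0 1))
      + χ (f (X 1 0)) * χ (f (X 1 0)) + χ (f (X 1 1)) * χ (f (X 1 1))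
      = χ (f (X 0 0)) * (χ (f (X 0 0))) + χ (f (X 0 1)) * (χ (f (X 0 1)))
      + χ (f (X 1 0)) * (χ (f (X 1 0))) + χ (f (X 1 1)) * (χ (f (X 1 1))) from rfl]
    rw [hEfin (X 0 0), hEfin (X 0 1), hEfin (X 1 0), hEfin (X 1 1)]
    simp only [Finset.mul_sum]
    rw [← Finset.sum_add_distrib, ← Finset.sum_add_distrib, ← Finset.sum_add_distrib]
    refine Finset.sum_congr rfl fun r _ => ?_
    rw [hsplitT r 0 0, hsplitT r 0 1, hsplitT r 1 0, hsplitT r 1 1]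
    ring
  have hbound : ∀ r : Fin m,
      χ (f (X 0 0)) * ((s r i 0 0 - s r i 0 1) * ((s r j 0 0 - s r j 0 1) *
            ∏ k ∈ (Finset.univ.erase i).erase j, (s r k (z k) 0 - s r k (z k) 1)))
          + χ (f (X 0 1)) * ((s r i 0 0 - s r i 0 1) * ((s r j 1 0 - s r j 1 1) *
            ∏ k ∈ (Finset.univ.erase i).erase j, (s r k (z k) 0 - s r k (z k) 1)))
          + χ (f (X 1 0)) * ((s r i 1 0 - s r i 1 1) * ((s r j 0 0 - s r j 0 1) *
            ∏ k ∈ (Finset.univ.erase i).erase j, (s r k (z k) 0 - s r k (z k) 1)))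
          + χ (f (X 1 1)) * ((s r i 1 0 - s r i 1 1) * ((s r j 1 0 - s r j 1 1) *
            ∏ k ∈ (Finset.univ.erase i).erase j, (s r k (z k) 0 - s r k (z k) 1))) ≤ 2 := by
    intro r
    have hg : |∏ k ∈ (Finset.univ.erase i).erase j, (s r k (z k) 0 - s r k (z k) 1)| ≤ 1 := by
      rw [Finset.abs_prod]
      exact Finset.prod_le_one (fun k _ => abs_nonneg _) (fun k _ => ht r k (z k))
    have H := chsh_bound (χ (f (X 0 0))) (χ (f (X 0 1))) (χ (f (X 1 0))) (χ (f (X 1 1)))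
      (s r i 0 0 - s r i 0 1) (s r i 1 0 - s r i 1 1)
      (s r j 0 0 - s r j 0 1) (s r j 1 0 - s r j 1 1)
      (∏ k ∈ (Finset.univ.erase i).erase j, (s r k (z k) 0 - s r k (z k) 1))
      (chi_pm _) (chi_pm _) (chi_pm _) (chi_pm _) hεprod
      (ht r i 0) (ht r i 1) (ht r j 0) (ht r j 1) hg
    calc _ = χ (f (X 0 0)) * ((s r i 0 0 - s r i 0 1) * (s r j 0 0 - s r j 0 1) *
            ∏ k ∈ (Finset.univ.erase i).erase j, (s r k (z k) 0 - s r k (z k) 1))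
          + χ (f (X 0 1)) * ((s r i 0 0 - s r i 0 1) * (s r j 1 0 - s r j 1 1) *
            ∏ k ∈ (Finset.univ.erase i).erase j, (s r k (z k) 0 - s r k (z k) 1))
          + χ (f (X 1 0)) * ((s r i 1 0 - s r i 1 1) * (s r j 0 0 - s r j 0 1) *
            ∏ k ∈ (Finset.univ.erase i).erase j, (s r k (z k) 0 - s r k (z k) 1))
          + χ (f (X 1 1)) * ((s r i 1 0 - s r i 1 1) * (s r j 1 0 - s r j 1 1) *
            ∏ k ∈ (Finset.univ.erase i).erase j, (s r k (z k) 0 - s r k (z k) 1)) := by ring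
      _ ≤ 2 := H
  have hfinal : (4 : ℝ) ≤ 2 := by
    calc (4 : ℝ) = ∑ r, q r * (χ (f (X 0 0)) * ((s r i 0 0 - s r i 0 1) * ((s r j 0 0 - s r j 0 1) *
            ∏ k ∈ (Finset.univ.erase i).erase j, (s r k (z k) 0 - s r k (z k) 1)))
          + χ (f (X 0 1)) * ((s r i 0 0 - s r i 0 1) * ((s r j 1 0 - s r j 1 1) *
            ∏ k ∈ (Finset.univ.erase i).erase j, (s r k (z k) 0 - s r k (z k) 1)))
          + χ (f (X 1 0)) * ((s r i 1 0 - s r i 1 1) * ((s r j 0 0 - s r j 0 1) *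
            ∏ k ∈ (Finset.univ.erase i).erase j, (s r k (z k) 0 - s r k (z k) 1)))
          + χ (f (X 1 1)) * ((s r i 1 0 - s r i 1 1) * ((s r j 1 0 - s r j 1 1) *
            ∏ k ∈ (Finset.univ.erase i).erase j, (s r k (z k) 0 - s r k (z k) 1)))) := by
            rw [← hS2, hS1]
      _ ≤ ∑ r, q r * 2 := by
            refine Finset.sum_le_sum fun r _ => ?_
            exact mul_le_mul_of_nonneg_left (hbound r) (hq0 r)
      _ = 2 := by rw [← Finset.sum_mul, hq1, one_mul]
  linarith
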